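/- arXiv:1101.5721 — 5 statements merged into one kernel-verified Lean document; each statement's English description precedes it below -/
import Mathlib

section
/- Let q > 2 and ρ = 1 - (q-2)/(2q³). Suppose (d_t), (s_t) are positive sequences satisfying d_{t+1}/s_{t+1} = (d_t/s_t)(1 - ((q-1)/(2q³))e^{-(1/q)(d_t/s_t)}) for all t ≥ t₁, with d_{t₁}/s_{t₁} < 1/q² and d_t/s_t < 1 for all t ≥ t₁. Then d_{t₁+t}/s_{t₁+t} < (1/q²)ρ^t for all t ≥ 0. -/
theorem stmt_5 (q : ℝ) (hq : 2 < q) (ρ : ℝ) (hρ : ρ = 1 - (q - 2) / (2 * q ^ 3))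
    (d s : ℕ → ℝ) (t₁ : ℕ)
    (hdpos : ∀ t, 0 < d t) (hspos : ∀ t, 0 < s t)
    (hrec : ∀ t, t₁ ≤ t →
      d (t + 1) / s (t + 1) =
        (d t / s t) * (1 - (q - 1) / (2 * q ^ 3) * Real.exp (-(1 / q) * (d t / s t))))
    (hinit : d t₁ / s t₁ < 1 / q ^ 2)
    (hratio : ∀ t, t₁ ≤ t → d t / s t < 1) :
    ∀ t : ℕ, d (t₁ + t) / s (t₁ + t) < 1 / q ^ 2 * ρ ^ t := by
  have hq0 : 0 < q := by linarith
  have hq3 : 0 < 2 * q ^ 3 := by positivity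
  have hρpos : 0 < ρ := by
    rw [hρ, sub_pos, div_lt_one hq3]
    nlinarith
  intro t
  induction t with
  | zero => simpa using hinit
  | succ t ih =>
    have hle : t₁ ≤ t₁ + t := Nat.le_add_right _ _
    set x := d (t₁ + t) / s (t₁ + t) with hx
    have hxpos : 0 < x := div_pos (hdpos _) (hspos _)
    have hx1 : x < 1 := hratio _ hle
    have hrec' := hrec (t₁ + t) hle
    have heq : t₁ + (t + 1) = (t₁ + t) + 1 := by ring
    rw [heq, hrec']
    set c := (q - 1) / (2 * q ^ 3) with hc
    have hexp_le1 : Real.exp (-(1 / q) * x) ≤ 1 := by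
      rw [Real.exp_le_one_iff]
      have h0 : 0 < 1 / q := by positivity
      nlinarith
    have hcpos : 0 < c := div_pos (by linarith) hq3
    have hfacpos : 0 < 1 - c * Real.exp (-(1 / q) * x) := by
      have hc1 : c < 1 := by
        rw [hc, div_lt_one hq3]; nlinarith
      nlinarith [Real.exp_pos (-(1 / q) * x)]
    have hexp_ge : 1 - 1 / q ≤ Real.exp (-(1 / q) * x) := by
      have h1 : Real.exp (-(1 / q)) ≤ Real.exp (-(1 / q) * x) := by
        apply Real.exp_le_exp.mpr
        have h0 : 0 < 1 / q := by positivity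
        nlinarith
      have h2 := Real.add_one_le_exp (-(1 / q))
      linarith
    have hfacle : 1 - c * Real.exp (-(1 / q) * x) ≤ ρ := by
      rw [hρ]
      have h3 : (q - 2) / (2 * q ^ 3) ≤ c * (1 - 1 / q) := by
        rw [hc, div_le_iff₀ hq3]
        have hqne : q ≠ 0 := ne_of_gt hq0
        field_simp
        nlinarith
      have h4 : c * (1 - 1 / q) ≤ c * Real.exp (-(1 / q) * x) :=
        mul_le_mul_of_nonneg_left hexp_ge (le_of_lt hcpos)
      linarith
    calc x * (1 - c * Real.exp (-(1 / q) * x))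
        < (1 / q ^ 2 * ρ ^ t) * (1 - c * Real.exp (-(1 / q) * x)) :=
          mul_lt_mul_of_pos_right ih hfacpos
      _ ≤ (1 / q ^ 2 * ρ ^ t) * ρ :=
          mul_le_mul_of_nonneg_left hfacle (by positivity)
      _ = 1 / q ^ 2 * ρ ^ (t + 1) := by ring
end

section
/- Let q > 2 and ρ = 1 - (q-2)/(2q³). Suppose (s_t) is a positive sequence satisfying s_{t+1} = s_t e^{-(1/q)(d_t/s_t)} where 0 < d_t/s_t < (1/q²)ρ^{t - t₁} for all t ≥ t₁. Then for all t ≥ 0, s_{t₁+t} ≥ s_{t₁}(1 - 4/(q-2)). -/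
theorem stmt_6 (q : ℝ) (hq : 2 < q) (ρ : ℝ) (hρ : ρ = 1 - (q - 2) / (2 * q ^ 3))
    (d s : ℕ → ℝ) (t₁ : ℕ)
    (hspos : ∀ t, 0 < s t)
    (hrec : ∀ t, t₁ ≤ t → s (t + 1) = s t * Real.exp (-(1 / q) * (d t / s t)))
    (hratio : ∀ t, t₁ ≤ t → 0 < d t / s t ∧ d t / s t < 1 / q ^ 2 * ρ ^ (t - t₁)) :
    ∀ t : ℕ, s (t₁ + t) ≥ s t₁ * (1 - 4 / (q - 2)) := by
  have hq0 : 0 < q := by linarith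
  have hq2 : (0:ℝ) < q - 2 := by linarith
  have hρ0 : 0 ≤ ρ := by
    have h : (q - 2) / (2 * q ^ 3) ≤ 1 := by
      rw [div_le_one (by positivity)]
      nlinarith [mul_pos (mul_pos hq0 (by linarith : (0:ℝ) < q - 1)) (by linarith : (0:ℝ) < q + 1)]
    rw [hρ]; linarith
  have hρ1 : ρ < 1 := by
    have : 0 < (q - 2) / (2 * q ^ 3) := by positivity
    rw [hρ]; linarith
  have key : ∀ t : ℕ, s (t₁ + t) ≥
      s t₁ * Real.exp (-(1 / q ^ 3) * ∑ i ∈ Finset.range t, ρ ^ i) := by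
    intro t
    induction t with
    | zero => simp
    | succ n ih =>
      have hle : t₁ ≤ t₁ + n := Nat.le_add_right _ _
      have hx := hratio (t₁ + n) hle
      have hxs : (t₁ + n) - t₁ = n := by omega
      rw [hxs] at hx
      have heq : t₁ + (n + 1) = (t₁ + n) + 1 := rfl
      rw [heq, hrec (t₁ + n) hle, Finset.sum_range_succ]
      have h1 : Real.exp (-(1 / q) * (d (t₁ + n) / s (t₁ + n))) ≥
          Real.exp (-(1 / q ^ 3) * ρ ^ n) := by
        apply Real.exp_le_exp.mpr
        have hc : (1:ℝ) / q ^ 3 = 1 / q * (1 / q ^ 2) := by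
          rw [div_mul_div_comm, one_mul]; ring_nf
        have harg : -(1 / q ^ 3) * ρ ^ n = -(1 / q) * (1 / q ^ 2 * ρ ^ n) := by
          rw [hc]; ring
        rw [harg]
        have h2 := hx.2
        have h3 : 0 < 1 / q := by positivity
        nlinarith
      calc s (t₁ + n) * Real.exp (-(1 / q) * (d (t₁ + n) / s (t₁ + n)))
          ≥ (s t₁ * Real.exp (-(1 / q ^ 3) * ∑ i ∈ Finset.range n, ρ ^ i)) *
            Real.exp (-(1 / q ^ 3) * ρ ^ n) := by
            apply mul_le_mul ih h1 (Real.exp_pos _).le (hspos _).le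
        _ = s t₁ * Real.exp (-(1 / q ^ 3) * ((∑ i ∈ Finset.range n, ρ ^ i) + ρ ^ n)) := by
            rw [mul_assoc, ← Real.exp_add, mul_add]
  intro t
  refine le_trans ?_ (key t)
  have hne : ρ ≠ 1 := ne_of_lt hρ1
  have hsum : ∑ i ∈ Finset.range t, ρ ^ i ≤ 2 * q ^ 3 / (q - 2) := by
    rw [geom_sum_eq hne]
    have h1 : (ρ ^ t - 1) / (ρ - 1) = (1 - ρ ^ t) / (1 - ρ) := by
      rw [div_eq_div_iff (by linarith) (by linarith)]; ring
    rw [h1]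
    have h2 : (1 - ρ ^ t) / (1 - ρ) ≤ 1 / (1 - ρ) := by
      gcongr
      · have := pow_nonneg hρ0 t; linarith
    have h3 : 1 / (1 - ρ) = 2 * q ^ 3 / (q - 2) := by
      rw [hρ]
      rw [show (1:ℝ) - (1 - (q - 2) / (2 * q ^ 3)) = (q - 2) / (2 * q ^ 3) by ring]
      rw [one_div_div]
    linarith
  have hexparg : -(1 / q ^ 3) * (2 * q ^ 3 / (q - 2)) = -(2 / (q - 2)) := by
    field_simp
  have hexp : Real.exp (-(1 / q ^ 3) * ∑ i ∈ Finset.range t, ρ ^ i) ≥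
      Real.exp (-(2 / (q - 2))) := by
    apply Real.exp_le_exp.mpr
    rw [← hexparg]
    have h3 : 0 < 1 / q ^ 3 := by positivity
    nlinarith
  have hlb : Real.exp (-(2 / (q - 2))) ≥ 1 - 2 / (q - 2) := by
    have := Real.add_one_le_exp (-(2 / (q - 2)))
    linarith
  have h4 : (1 : ℝ) - 4 / (q - 2) ≤ 1 - 2 / (q - 2) := by
    have h5 : (2:ℝ) / (q - 2) ≤ 4 / (q - 2) := by
      gcongr
      norm_num
    linarith
  have hs := hspos t₁
  nlinarith [hexp, hlb, h4, hs]
end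

section
/- Let q > 2, ρ = 1 - (q-2)/(2q³), μ = 1 - 1/(2q²). Suppose (d_t), (s_t) are positive sequences with d_{t+1} = d_t(1 - ((q-1)/(2q³))e^{-(1/q)(d_t/s_t)})e^{-(1/q)(d_t/s_t)} and s_{t+1} = s_t e^{-(1/q)(d_t/s_t)} for t ≥ t₁, and 0 < d_t/s_t < (1/q²)ρ^{t-t₁} for all t ≥ t₁. Then d_{t₁+t} ≥ d_{t₁}(1 - 4/(q-2))μ^t for all t ≥ 0. -/
theorem stmt_7 (q : ℝ) (hq : 2 < q) (ρ μ : ℝ)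
    (hρ : ρ = 1 - (q - 2) / (2 * q ^ 3)) (hμ : μ = 1 - 1 / (2 * q ^ 2))
    (d s : ℕ → ℝ) (t₁ : ℕ)
    (hdpos : ∀ t, 0 < d t) (hspos : ∀ t, 0 < s t)
    (hdrec : ∀ t, t₁ ≤ t →
      d (t + 1) = d t * (1 - (q - 1) / (2 * q ^ 3) * Real.exp (-(1 / q) * (d t / s t)))
        * Real.exp (-(1 / q) * (d t / s t)))
    (hsrec : ∀ t, t₁ ≤ t → s (t + 1) = s t * Real.exp (-(1 / q) * (d t / s t)))
    (hratio : ∀ t, t₁ ≤ t → 0 < d t / s t ∧ d t / s t < 1 / q ^ 2 * ρ ^ (t - t₁)) :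
    ∀ t : ℕ, d (t₁ + t) ≥ d t₁ * (1 - 4 / (q - 2)) * μ ^ t := by
  have hq0 : (0:ℝ) < q := by linarith
  have hq2 : (0:ℝ) < q - 2 := by linarith
  have hq2pos : (0:ℝ) < q ^ 2 := by positivity
  have hq3pos : (0:ℝ) < q ^ 3 := by positivity
  have hμ0 : 0 < μ := by
    rw [hμ]
    have h1 : 1 / (2 * q ^ 2) < 1 := by
      rw [div_lt_one (by positivity)]; nlinarith
    linarith
  have hρ1 : ρ < 1 := by
    rw [hρ]
    have : 0 < (q - 2) / (2 * q ^ 3) := by positivity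
    linarith
  have hρ0 : 0 < ρ := by
    rw [hρ]
    have : (q - 2) / (2 * q ^ 3) < 1 := by
      rw [div_lt_one (by positivity)]; nlinarith
    linarith
  -- Step 1: key one-step bound
  have key : ∀ t, t₁ ≤ t → μ * d t * Real.exp (-(1 / q) * (d t / s t)) ≤ d (t + 1) := by
    intro t ht
    have hr := (hratio t ht).1
    set E := Real.exp (-(1 / q) * (d t / s t)) with hE
    have hEpos : 0 < E := Real.exp_pos _
    have hE1 : E ≤ 1 := by
      rw [hE, Real.exp_le_one_iff]
      have : 0 < 1 / q := by positivity
      nlinarith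
    have hc0 : 0 ≤ (q - 1) / (2 * q ^ 3) := by
      apply div_nonneg <;> nlinarith
    have hcE : (q - 1) / (2 * q ^ 3) * E ≤ 1 / (2 * q ^ 2) := by
      have h1 : (q - 1) / (2 * q ^ 3) * E ≤ (q - 1) / (2 * q ^ 3) := by
        nlinarith
      have h2 : (q - 1) / (2 * q ^ 3) ≤ 1 / (2 * q ^ 2) := by
        rw [div_le_div_iff₀ (by positivity) (by positivity)]; nlinarith
      linarith
    have hμle : μ ≤ 1 - (q - 1) / (2 * q ^ 3) * E := by rw [hμ]; linarith
    rw [hdrec t ht]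
    have hd := hdpos t
    nlinarith [mul_pos hd hEpos]
  -- Step 2: d (t₁+t) ≥ d t₁ * μ^t * s ratio
  have step2 : ∀ t : ℕ, d t₁ * μ ^ t * (s (t₁ + t) / s t₁) ≤ d (t₁ + t) := by
    intro t
    induction t with
    | zero => simp [div_self (ne_of_gt (hspos t₁))]
    | succ n ih =>
      have hle : t₁ ≤ t₁ + n := Nat.le_add_right _ _
      have hk := key (t₁ + n) hle
      have hs := hsrec (t₁ + n) hle
      have hEpos : (0:ℝ) < Real.exp (-(1 / q) * (d (t₁ + n) / s (t₁ + n))) := Real.exp_pos _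
      calc d t₁ * μ ^ (n + 1) * (s (t₁ + (n + 1)) / s t₁)
          = μ * (d t₁ * μ ^ n * (s (t₁ + n) / s t₁)) *
              Real.exp (-(1 / q) * (d (t₁ + n) / s (t₁ + n))) := by
            rw [show t₁ + (n + 1) = (t₁ + n) + 1 from rfl, hs, pow_succ]; ring
        _ ≤ μ * d (t₁ + n) * Real.exp (-(1 / q) * (d (t₁ + n) / s (t₁ + n))) := by
            apply mul_le_mul_of_nonneg_right _ hEpos.le
            exact mul_le_mul_of_nonneg_left ih hμ0.le
        _ ≤ d ((t₁ + n) + 1) := hk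
  -- Step 3: formula for s
  have sform : ∀ t : ℕ, s (t₁ + t) =
      s t₁ * Real.exp (-(1 / q) * ∑ j ∈ Finset.range t, d (t₁ + j) / s (t₁ + j)) := by
    intro t
    induction t with
    | zero => simp
    | succ n ih =>
      rw [show t₁ + (n + 1) = (t₁ + n) + 1 from rfl, hsrec (t₁ + n) (Nat.le_add_right _ _),
        Finset.sum_range_succ]
      set r := d (t₁ + n) / s (t₁ + n) with hr
      rw [ih, mul_add, Real.exp_add]
      ring
  -- Step 4: sum bound
  have h1ρ : 1 - ρ = (q - 2) / (2 * q ^ 3) := by rw [hρ]; ring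
  have h1ρpos : 0 < 1 - ρ := by rw [h1ρ]; positivity
  have sumle : ∀ t : ℕ, ∑ j ∈ Finset.range t, d (t₁ + j) / s (t₁ + j) ≤ 2 * q / (q - 2) := by
    intro t
    have h1 : ∑ j ∈ Finset.range t, d (t₁ + j) / s (t₁ + j) ≤
        ∑ j ∈ Finset.range t, 1 / q ^ 2 * ρ ^ j := by
      apply Finset.sum_le_sum
      intro j _
      have := (hratio (t₁ + j) (Nat.le_add_right _ _)).2
      simpa using this.le
    have hgeom : ∑ j ∈ Finset.range t, ρ ^ j ≤ 1 / (1 - ρ) := by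
      rw [geom_sum_eq (ne_of_lt hρ1) t]
      have heq : (ρ ^ t - 1) / (ρ - 1) = (1 - ρ ^ t) / (1 - ρ) := by
        rw [div_eq_div_iff (by linarith) (by linarith)]; ring
      rw [heq]
      have hpt : 1 - ρ ^ t ≤ 1 := by nlinarith [pow_nonneg hρ0.le t]
      gcongr
    have h2 : ∑ j ∈ Finset.range t, 1 / q ^ 2 * ρ ^ j =
        1 / q ^ 2 * ∑ j ∈ Finset.range t, ρ ^ j := by
      rw [Finset.mul_sum]
    have h3 : 1 / q ^ 2 * (1 / (1 - ρ)) = 2 * q / (q - 2) := by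
      rw [h1ρ]
      field_simp
    have h4 : 1 / q ^ 2 * (∑ j ∈ Finset.range t, ρ ^ j) ≤ 1 / q ^ 2 * (1 / (1 - ρ)) := by
      apply mul_le_mul_of_nonneg_left hgeom (by positivity)
    linarith [h1, h2 ▸ h4, h3 ▸ h4]
  -- Step 5: ratio bound
  have hratio' : ∀ t : ℕ, 1 - 4 / (q - 2) ≤ s (t₁ + t) / s t₁ := by
    intro t
    rw [sform t, mul_div_cancel_left₀ _ (ne_of_gt (hspos t₁))]
    set S := ∑ j ∈ Finset.range t, d (t₁ + j) / s (t₁ + j) with hS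
    have hSle := sumle t
    have hexp := Real.add_one_le_exp (-(1 / q) * S)
    have h5 : (1 / q) * S ≤ (1 / q) * (2 * q / (q - 2)) :=
      mul_le_mul_of_nonneg_left hSle (by positivity)
    have h6 : (1 / q) * (2 * q / (q - 2)) = 2 / (q - 2) := by
      field_simp
    have h7 : 2 / (q - 2) ≤ 4 / (q - 2) := by
      gcongr
      norm_num
    linarith
  -- Final assembly
  intro t
  rw [ge_iff_le]
  calc d t₁ * (1 - 4 / (q - 2)) * μ ^ t
      = (d t₁ * μ ^ t) * (1 - 4 / (q - 2)) := by ring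
    _ ≤ (d t₁ * μ ^ t) * (s (t₁ + t) / s t₁) := by
        apply mul_le_mul_of_nonneg_left (hratio' t)
        exact (mul_pos (hdpos t₁) (pow_pos hμ0 t)).le
    _ = d t₁ * μ ^ t * (s (t₁ + t) / s t₁) := by ring
    _ ≤ d (t₁ + t) := step2 t
end

section
/- Let q > 1, α ∈ [0, 1/q], and s, d, e > 0 with e < 1. Suppose a finite multiset M of positive reals has size m ≥ s(1+e') and average μ̄ ≤ ((1-qα)/(1-α))·γ·d for some γ ≥ 1 and e' with |e'| ≤ e. First add ⌈(α/(1-α))m⌉ elements of value qγd to M, then remove from the enlarged multiset all elements of value ≥ qγd. Then the resulting multiset M' has size ≥ (1-α')·s(1+e') for some α' ∈ [0,1/q] and average ≤ ((1-qα')/(1-α'))·γ·d. -/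
set_option maxHeartbeats 800000 in
theorem stmt_13 (q α s d e e' γ : ℝ)
    (hq : 1 < q) (hα : α ∈ Set.Icc 0 (1 / q))
    (hs : 0 < s) (hd : 0 < d) (he : 0 < e) (he1 : e < 1)
    (hγ : 1 ≤ γ) (he' : |e'| ≤ e)
    (M : Multiset ℝ) (hpos : ∀ x ∈ M, 0 < x)
    (hcard : (M.card : ℝ) ≥ s * (1 + e'))
    (havg : M.sum / M.card ≤ (1 - q * α) / (1 - α) * γ * d) :
    ∃ α' ∈ Set.Icc 0 (1 / q),
      ((Multiset.filter (fun x => x < q * γ * d)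
          (M + Multiset.replicate ⌈α / (1 - α) * M.card⌉₊ (q * γ * d))).card : ℝ)
        ≥ (1 - α') * s * (1 + e') ∧
      (Multiset.filter (fun x => x < q * γ * d)
          (M + Multiset.replicate ⌈α / (1 - α) * M.card⌉₊ (q * γ * d))).sum /
        (Multiset.filter (fun x => x < q * γ * d)
          (M + Multiset.replicate ⌈α / (1 - α) * M.card⌉₊ (q * γ * d))).card
        ≤ (1 - q * α') / (1 - α') * γ * d := by
  obtain ⟨hα0, hαq⟩ := hα
  have hq0 : (0:ℝ) < q := lt_trans one_pos hq
  have hγ0 : (0:ℝ) < γ := lt_of_lt_of_le one_pos hγ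
  have hγd : (0:ℝ) < γ * d := mul_pos hγ0 hd
  have he'1 : -1 < e' := by have := (abs_le.mp he').1; linarith
  have hse : 0 < s * (1 + e') := by nlinarith
  have hm : (0:ℝ) < M.card := lt_of_lt_of_le hse hcard
  have hrep : Multiset.filter (fun x => x < q * γ * d)
      (Multiset.replicate ⌈α / (1 - α) * M.card⌉₊ (q * γ * d)) = 0 := by
    rw [Multiset.filter_eq_nil]
    intro a ha
    rw [(Multiset.eq_of_mem_replicate ha)]
    exact lt_irrefl _
  have hfilt : Multiset.filter (fun x => x < q * γ * d)
      (M + Multiset.replicate ⌈α / (1 - α) * M.card⌉₊ (q * γ * d)) =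
      Multiset.filter (fun x => x < q * γ * d) M := by
    rw [Multiset.filter_add, hrep, add_zero]
  rw [hfilt]
  set F := Multiset.filter (fun x => x < q * γ * d) M with hF
  set G := Multiset.filter (fun x => ¬ x < q * γ * d) M with hG
  have hsplit : F + G = M := Multiset.filter_add_not _ M
  set m : ℝ := (M.card : ℝ) with hmdef
  set k : ℝ := (G.card : ℝ) with hkdef
  have hk0 : 0 ≤ k := Nat.cast_nonneg _
  have hcards : (F.card : ℝ) + k = m := by
    rw [hkdef, hmdef, ← Nat.cast_add, ← Multiset.card_add, hsplit]
  have hsums : F.sum + G.sum = M.sum := by rw [← Multiset.sum_add, hsplit]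
  have hα1 : α < 1 := lt_of_le_of_lt hαq (by rw [div_lt_one hq0]; exact hq)
  have hMsum : M.sum ≤ m * ((1 - q * α) / (1 - α) * γ * d) := by
    rw [div_le_iff₀ hm] at havg; linarith [havg]
  have hfac : (1 - q * α) / (1 - α) ≤ 1 := by
    rw [div_le_one (by linarith)]; nlinarith
  have hMsum2 : M.sum ≤ m * (γ * d) := by
    nlinarith [mul_le_mul_of_nonneg_right hfac (le_of_lt (mul_pos hm hγd))]
  have hGsum : k * (q * γ * d) ≤ G.sum := by
    have := Multiset.card_nsmul_le_sum (s := G) (a := q * γ * d)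
      (fun x hx => not_lt.mp (Multiset.mem_filter.mp hx).2)
    rwa [nsmul_eq_mul] at this
  have hFpos : 0 ≤ F.sum :=
    Multiset.sum_nonneg fun x hx => (hpos x (Multiset.mem_of_mem_filter hx)).le
  have hqk : q * k ≤ m := by nlinarith [hγd, hGsum, hsums, hFpos, hMsum2]
  have hkm : k < m := by nlinarith
  have hmk : (0:ℝ) < m - k := by linarith
  have hkey : F.sum ≤ (m - q * k) * (γ * d) := by nlinarith
  have hcardF : (F.card : ℝ) = m - k := by linarith
  have h1 : 1 - k / m = (m - k) / m := by field_simp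
  have h1ne : 1 - k / m ≠ 0 := by rw [h1]; exact div_ne_zero hmk.ne' hm.ne'
  refine ⟨k / m, ⟨div_nonneg hk0 hm.le, ?_⟩, ?_, ?_⟩
  · rw [div_le_div_iff₀ hm hq0]; nlinarith
  · rw [hcardF]
    have h2 : 0 ≤ 1 - k / m := by
      rw [sub_nonneg, div_le_one hm]; exact hkm.le
    have h3 : (1 - k / m) * m = m - k := by field_simp
    nlinarith [mul_le_mul_of_nonneg_left hcard h2]
  · rw [hcardF, div_le_iff₀ hmk]
    have hrhs : (1 - q * (k / m)) / (1 - k / m) * γ * d * (m - k)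
        = (m - q * k) * (γ * d) := by
      field_simp
    rw [hrhs]
    exact hkey
end

section
/- Let q > 6. Define μ = 1 - 1/(2q²) and ρ = 1 - (q-2)/(2q³). For every δ > 0 there exists c_δ > 0 such that: if Δ is sufficiently large, k ≤ c_δ log Δ, s_{t₁} = (Δ/k)e^{-Ck} for a constant C > 0, η_{t₁} ≤ Δ, s_{t₁+t} ≥ s_{t₁}(1 - 4/(q-2)) for all t, and η_{t₁+t} < Δρ^t, then there exists t ≤ δ log Δ with η_{t₁+t} < ((q-1)/q)·s_{t₁+t}. -/
theorem stmt_16 (q : ℝ) (hq : 6 < q) (ρ : ℝ) (hρ : ρ = 1 - (q - 2) / (2 * q ^ 3)) :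
    ∀ δ > (0 : ℝ), ∀ C > (0 : ℝ), ∃ cδ > (0 : ℝ), ∃ Δ₀ : ℝ, ∀ Δ : ℝ, Δ₀ ≤ Δ →
      ∀ k : ℝ, 0 < k → k ≤ cδ * Real.log Δ →
      ∀ (s η : ℕ → ℝ) (t₁ : ℕ),
        s t₁ = Δ / k * Real.exp (-C * k) →
        η t₁ ≤ Δ →
        (∀ t : ℕ, s (t₁ + t) ≥ s t₁ * (1 - 4 / (q - 2))) →
        (∀ t : ℕ, η (t₁ + t) < Δ * ρ ^ t) →
        ∃ t : ℕ, (t : ℝ) ≤ δ * Real.log Δ ∧ η (t₁ + t) < (q - 1) / q * s (t₁ + t) := by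
  intro δ hδ C hC
  have hq0 : (0:ℝ) < q := by linarith
  have hρpos : 0 < ρ := by
    rw [hρ]
    have h1 : (q - 2) / (2 * q ^ 3) < 1 := by
      rw [div_lt_one (by positivity)]
      nlinarith [pow_pos hq0 3, sq_nonneg q, mul_pos hq0 hq0]
    linarith
  have hρlt1 : ρ < 1 := by
    rw [hρ]
    have : 0 < (q - 2) / (2 * q ^ 3) := div_pos (by linarith) (by positivity)
    linarith
  obtain ⟨L, hLdef⟩ : ∃ L : ℝ, L = -Real.log ρ := ⟨_, rfl⟩
  have hL : 0 < L := by
    have := Real.log_neg hρpos hρlt1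
    rw [hLdef]; linarith
  obtain ⟨B, hBdef⟩ : ∃ B : ℝ, B = (q - 1) / q * ((q - 6) / (q - 2)) := ⟨_, rfl⟩
  have hB : 0 < B := by
    rw [hBdef]; apply mul_pos <;> apply div_pos <;> linarith
  obtain ⟨a, hadef⟩ : ∃ a : ℝ, a = 3 * δ * L / 4 := ⟨_, rfl⟩
  have ha : 0 < a := by rw [hadef]; positivity
  obtain ⟨cδ, hcdef⟩ : ∃ c : ℝ, c = min (δ * L / (4 * C)) 1 := ⟨_, rfl⟩
  have hcδ : 0 < cδ := by
    rw [hcdef]; exact lt_min (by positivity) one_pos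
  refine ⟨cδ, hcδ, Real.exp (max 1 ((L - 1 - Real.log (a/2) - Real.log B) / (a/2))), ?_⟩
  intro Δ hΔ k hk hkc s η t₁ hs hη0 hsl hηl
  have hΔpos : 0 < Δ := lt_of_lt_of_le (Real.exp_pos _) hΔ
  obtain ⟨x, hxdef⟩ : ∃ x : ℝ, x = Real.log Δ := ⟨_, rfl⟩
  have hx : max 1 ((L - 1 - Real.log (a/2) - Real.log B) / (a/2)) ≤ x := by
    rw [hxdef]
    rw [← Real.log_exp (max 1 ((L - 1 - Real.log (a/2) - Real.log B) / (a/2)))]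
    exact Real.log_le_log (Real.exp_pos _) hΔ
  have hxΔ : Real.log Δ = x := hxdef.symm
  rw [hxΔ] at hkc
  have hc1 : cδ ≤ 1 := by rw [hcdef]; exact min_le_right _ _
  have hc2 : cδ ≤ δ * L / (4 * C) := by rw [hcdef]; exact min_le_left _ _
  have hx1 : 1 ≤ x := le_trans (le_max_left _ _) hx
  have hx2 : (L - 1 - Real.log (a/2) - Real.log B) / (a/2) ≤ x :=
    le_trans (le_max_right _ _) hx
  have hx2' : L - 1 - Real.log (a/2) - Real.log B ≤ (a/2) * x := by
    rw [div_le_iff₀ (by positivity)] at hx2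
    linarith [hx2]
  -- T is the round we pick
  obtain ⟨T, hTdef⟩ : ∃ T : ℕ, T = ⌊δ * x⌋₊ := ⟨_, rfl⟩
  have hδx : 0 ≤ δ * x := by positivity
  have hTle : (T : ℝ) ≤ δ * x := by rw [hTdef]; exact Nat.floor_le hδx
  have hTge : δ * x - 1 ≤ (T : ℝ) := by
    rw [hTdef]
    have := Nat.lt_floor_add_one (δ * x)
    linarith
  refine ⟨T, by rw [hxΔ]; exact hTle, ?_⟩
  -- key log inequality
  have hlogx : Real.log x ≤ (a/2) * x - 1 - Real.log (a/2) := by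
    have h1 : Real.log ((a/2) * x) ≤ (a/2) * x - 1 :=
      Real.log_le_sub_one_of_pos (by positivity)
    rw [Real.log_mul (by positivity) (by linarith)] at h1
    linarith
  have hkx : k ≤ x := by
    calc k ≤ cδ * x := hkc
    _ ≤ 1 * x := by
        exact mul_le_mul_of_nonneg_right hc1 (by linarith)
    _ = x := one_mul x
  have hlogk : Real.log k ≤ Real.log x := Real.log_le_log hk hkx
  have hCk : C * k ≤ δ * L / 4 * x := by
    have h1 : k ≤ δ * L / (4 * C) * x := by
      calc k ≤ cδ * x := hkc
      _ ≤ δ * L / (4 * C) * x := by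
          exact mul_le_mul_of_nonneg_right hc2 (by linarith)
    calc C * k ≤ C * (δ * L / (4 * C) * x) := by nlinarith
    _ = δ * L / 4 * x := by
        have hC0 : C ≠ 0 := ne_of_gt hC
        field_simp
  have hkey : C * k + Real.log k - Real.log B ≤ (T : ℝ) * L := by
    have h1 : (δ * x - 1) * L ≤ (T : ℝ) * L :=
      mul_le_mul_of_nonneg_right hTge hL.le
    have hsum : δ * L / 4 * x + a / 2 * x + a / 2 * x = δ * x * L := by
      rw [hadef]; ring
    have h3 : Real.log k ≤ a / 2 * x - 1 - Real.log (a / 2) :=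
      le_trans hlogk hlogx
    linarith [hCk, hx2', h1, hsum, h3]
  -- bound ρ^T
  have hρT : ρ ^ T ≤ B * Real.exp (-C * k) / k := by
    have h1 : ρ ^ T = Real.exp ((T : ℝ) * Real.log ρ) := by
      rw [← Real.exp_log hρpos, ← Real.exp_nat_mul, Real.exp_log hρpos]
    rw [h1]
    have h2 : (T : ℝ) * Real.log ρ ≤ Real.log B + (-C * k) + (-Real.log k) := by
      have : (T : ℝ) * Real.log ρ = -((T:ℝ) * L) := by rw [hLdef]; ring
      rw [this]; linarith
    calc Real.exp ((T : ℝ) * Real.log ρ)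
        ≤ Real.exp (Real.log B + (-C * k) + (-Real.log k)) := Real.exp_le_exp.mpr h2
      _ = B * Real.exp (-C * k) / k := by
          rw [Real.exp_add, Real.exp_add, Real.exp_log hB, Real.exp_neg,
            Real.exp_log hk]
          ring
  have hsT : s (t₁ + T) ≥ s t₁ * (1 - 4 / (q - 2)) := hsl T
  have hfrac : 1 - 4 / (q - 2) = (q - 6) / (q - 2) := by
    have h2 : q - 2 ≠ 0 := by linarith
    field_simp
    ring
  have hst1 : 0 < s t₁ := by
    rw [hs]; positivity
  calc η (t₁ + T) < Δ * ρ ^ T := hηl T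
    _ ≤ Δ * (B * Real.exp (-C * k) / k) := by
        apply mul_le_mul_of_nonneg_left hρT (le_of_lt hΔpos)
    _ = B * s t₁ := by rw [hs]; ring
    _ = (q - 1) / q * (s t₁ * (1 - 4 / (q - 2))) := by
        rw [hfrac, hBdef]; ring
    _ ≤ (q - 1) / q * s (t₁ + T) := by
        exact mul_le_mul_of_nonneg_left hsT (div_pos (by linarith) hq0).le
end
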